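/- For t ≥ 0 satisfying (√(Pa²) + √t)² ≥ ρσ², define h(t) = Pa²/σ² if t ≥ ρ(σ² + Pa²), and h(t) = a²(P − v₂*(t)²)/σ² with v₂*(t) = (√(Pρ(1+ρ)a² + ρ(1+ρ)σ² − ρt) − √t)/(a(1+ρ)) otherwise. Then h is non-decreasing in t on its domain, i.e., UE1's maximum receive SINR under the proposed cooperative NOMA scheme 4 is non-decreasing in the interference power t = Qb². -/
import Mathlib


/-- UE1's maximum receive SINR under scheme 4 is non-decreasing in the
interference power `t = Qb²` on the feasibility domain. -/
theorem stmt_13 (a P σ2 ρ : ℝ) (ha : 0 < a) (hP : 0 < P) (hσ : 0 < σ2)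
    (hρ : 0 < ρ)
    (v2star h : ℝ → ℝ)
    (hv2 : ∀ t : ℝ, v2star t =
      (Real.sqrt (P * ρ * (1 + ρ) * a ^ 2 + ρ * (1 + ρ) * σ2 - ρ * t) -
        Real.sqrt t) / (a * (1 + ρ)))
    (hh : ∀ t : ℝ, h t =
      if t ≥ ρ * (σ2 + P * a ^ 2)
      then P * a ^ 2 / σ2
      else a ^ 2 * (P - (v2star t) ^ 2) / σ2) :
    MonotoneOn h {t : ℝ | 0 ≤ t ∧
      (Real.sqrt (P * a ^ 2) + Real.sqrt t) ^ 2 ≥ ρ * σ2} := by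
  intro x hx y hy hxy
  have hx0 : 0 ≤ x := hx.1
  have hy0 : 0 ≤ y := hy.1
  set T := ρ * (σ2 + P * a ^ 2) with hTdef
  have hden : 0 < a * (1 + ρ) := by positivity
  -- helper: for 0 ≤ t < T, v2star t ≥ 0
  have hvnn : ∀ t : ℝ, 0 ≤ t → t < T → 0 ≤ v2star t := by
    intro t ht0 htT
    rw [hv2 t]
    apply div_nonneg _ hden.le
    have : t ≤ P * ρ * (1 + ρ) * a ^ 2 + ρ * (1 + ρ) * σ2 - ρ * t := by
      nlinarith [htT]
    have := Real.sqrt_le_sqrt this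
    linarith
  rw [hh x, hh y]
  by_cases hxT : x ≥ T
  · have hyT : y ≥ T := le_trans hxT hxy
    simp [hxT, hyT]
  · simp only [hxT, if_neg hxT, ge_iff_le]
    have hxv : 0 ≤ v2star x := hvnn x hx0 (lt_of_not_ge hxT)
    by_cases hyT : y ≥ T
    · rw [if_pos hyT]
      apply div_le_div_of_nonneg_right _ hσ.le
      nlinarith [sq_nonneg (v2star x)]
    · rw [if_neg hyT]
      have hyv : 0 ≤ v2star y := hvnn y hy0 (lt_of_not_ge hyT)
      have hvle : v2star y ≤ v2star x := by
        rw [hv2 x, hv2 y]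
        apply div_le_div_of_nonneg_right _ hden.le
        have h1 : Real.sqrt (P * ρ * (1 + ρ) * a ^ 2 + ρ * (1 + ρ) * σ2 - ρ * y)
            ≤ Real.sqrt (P * ρ * (1 + ρ) * a ^ 2 + ρ * (1 + ρ) * σ2 - ρ * x) := by
          apply Real.sqrt_le_sqrt; nlinarith
        have h2 : Real.sqrt x ≤ Real.sqrt y := Real.sqrt_le_sqrt hxy
        linarith
      have hsq : (v2star y) ^ 2 ≤ (v2star x) ^ 2 := by
        exact pow_le_pow_left₀ hyv hvle 2
      apply div_le_div_of_nonneg_right _ hσ.le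
      nlinarith
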